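/- Let A be a finite abelian group, n ≥ 2, and consider the solution set F(0,n) = {(z₁,…,z_n) ∈ Aⁿ : 2z₁ + ⋯ + 2z_n = 0}. Let F_nz(0,n) be its subset of solutions with all z_i ≠ 0. Then |F_nz(0,n)| = |Tor₂(A)|·(|A|−1)^{n−1} − |F_nz(0,n−1)|, where Tor₂(A) = {a ∈ A : 2a = 0}. -/

import Mathlib

open Finset

/-- Nowhere-zero flows of the signed graph with one vertex and `n` negative
loops, with coefficients in `A`: tuples of nonzero elements `z` with
`2z₁ + ⋯ + 2zₙ = 0`. -/
def Fnz0 (A : Type*) [AddCommGroup A] (n : ℕ) : Set (Fin n → A) :=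
  {z | (∀ i, z i ≠ 0) ∧ ∑ i, 2 • z i = 0}

/-- The recurrence `|F_nz(0,n)| = |Tor₂(A)|·(|A|−1)^{n−1} − |F_nz(0,n−1)|`
for `n ≥ 2`. -/
theorem stmt5 (A : Type*) [AddCommGroup A] [Fintype A] (n : ℕ) (hn : 2 ≤ n) :
    (Nat.card (Fnz0 A n) : ℤ) =
      (Nat.card {a : A // 2 • a = 0} : ℤ) * ((Fintype.card A : ℤ) - 1) ^ (n - 1)
        - Nat.card (Fnz0 A (n - 1)) := by
  classical
  obtain ⟨k, rfl⟩ : ∃ k, n = k + 1 := ⟨n - 1, by omega⟩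
  show (Nat.card (Fnz0 A (k + 1)) : ℤ) =
      (Nat.card {a : A // 2 • a = 0} : ℤ) * ((Fintype.card A : ℤ) - 1) ^ k
        - Nat.card (Fnz0 A k)
  set W : Set (Fin (k + 1) → A) :=
    {z | (∀ i : Fin k, z i.castSucc ≠ 0) ∧ ∑ i, 2 • z i = 0} with hWdef
  have hsum : ∀ z : Fin (k + 1) → A,
      ∑ i, 2 • z i = (∑ i : Fin k, 2 • z i.castSucc) + 2 • z (Fin.last k) := by
    intro z; exact Fin.sum_univ_castSucc (fun i => 2 • z i)
  -- Equiv 1 : W ≃ nonzero tuples × torsion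
  have e1 : W ≃ ({y : Fin k → A // ∀ i, y i ≠ 0} × {a : A // 2 • a = 0}) := by
    refine ⟨fun z => (⟨fun i => z.1 i.castSucc, z.2.1⟩,
        ⟨z.1 (Fin.last k) + ∑ i : Fin k, z.1 i.castSucc, ?_⟩),
      fun p => ⟨Fin.snoc p.1.1 (p.2.1 - ∑ i, p.1.1 i), ?_, ?_⟩, ?_, ?_⟩
    · have h := z.2.2
      rw [hsum] at h
      rw [smul_add, Finset.smul_sum]
      exact (add_comm _ _).trans h
    · intro i; simpa using p.1.2 i
    · rw [hsum]
      simp only [Fin.snoc_castSucc, Fin.snoc_last, smul_sub, Finset.smul_sum]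
      rw [p.2.2]
      abel
    · intro z
      apply Subtype.ext
      dsimp only
      rw [add_sub_cancel_right]
      exact Fin.snoc_init_self z.1
    · intro p
      have h1 : (fun i : Fin k =>
          (Fin.snoc p.1.1 (p.2.1 - ∑ i, p.1.1 i) : Fin (k+1) → A) i.castSucc) = p.1.1 := by
        funext i; simp
      refine Prod.ext (Subtype.ext ?_) (Subtype.ext ?_)
      · exact h1
      · dsimp only
        rw [h1, Fin.snoc_last, sub_add_cancel]
  -- Equiv 2 : Fnz0 (k+1) ⊕ Fnz0 k ≃ W
  have e2 : (Fnz0 A (k + 1) ⊕ Fnz0 A k) ≃ W := by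
    refine ⟨fun x => x.elim (fun z => ⟨z.1, fun i => z.2.1 _, z.2.2⟩)
        (fun y => ⟨Fin.snoc y.1 0, ?_, ?_⟩),
      fun z => if h : z.1 (Fin.last k) = 0
        then Sum.inr ⟨fun i => z.1 i.castSucc, z.2.1, ?_⟩
        else Sum.inl ⟨z.1, ?_, z.2.2⟩, ?_, ?_⟩
    · intro i; simpa using y.2.1 i
    · rw [hsum]
      simpa using y.2.2
    · have h2 := z.2.2
      rw [hsum, h, smul_zero, add_zero] at h2
      exact h2
    · intro i
      induction i using Fin.lastCases with
      | last => exact h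
      | cast i => exact z.2.1 i
    · intro x
      cases x with
      | inl z =>
        simp only [Sum.elim_inl, dif_neg (z.2.1 (Fin.last k))]
        exact dif_neg (z.2.1 (Fin.last k))
      | inr y =>
        simp only [Sum.elim_inr]
        refine (dif_pos (by simp : (Fin.snoc y.1 0 : Fin (k+1) → A) (Fin.last k) = 0)).trans ?_
        congr 1
        apply Subtype.ext
        funext i
        simp
    · intro z
      by_cases h : z.1 (Fin.last k) = 0
      · simp only [dif_pos h, Sum.elim_inr]
        apply Subtype.ext
        dsimp only
        rw [← h]
        exact Fin.snoc_init_self z.1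
      · simp only [dif_neg h, Sum.elim_inl]
  -- card computations
  have hT : 1 ≤ Fintype.card A := Fintype.card_pos
  have hc1 : Nat.card W =
      Nat.card {a : A // 2 • a = 0} * (Fintype.card A - 1) ^ k := by
    rw [Nat.card_congr e1, Nat.card_prod, mul_comm]
    congr 1
    rw [Nat.card_congr (Equiv.subtypePiEquivPi (p := fun (_ : Fin k) (b : A) => b ≠ 0)),
      Nat.card_eq_fintype_card, Fintype.card_pi]
    simp [Set.card_ne_eq (0 : A)]
  have hc2 : Nat.card (Fnz0 A (k + 1)) + Nat.card (Fnz0 A k) = Nat.card W := by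
    rw [Nat.card_congr e2.symm, Nat.card_sum]
  have : ((Fintype.card A - 1 : ℕ) : ℤ) = (Fintype.card A : ℤ) - 1 := by
    push_cast [hT]; ring
  have := congrArg (fun m : ℕ => (m : ℤ)) (hc2.trans hc1)
  push_cast [Nat.cast_sub hT] at this
  linarith
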